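/- arXiv:2102.02875 — 4 statements merged into one kernel-verified Lean document; each statement's English description precedes it below -/
import Mathlib

section
/- Let P : [0,1] → L(H) be a continuously differentiable family of projections, Q(t) := P'(t)P(t) − P(t)P'(t), and U the solution of U'(t) = Q(t)U(t), U(0) = I. Then P(t)·U(t) = U(t)·P(0) for all t ∈ [0,1]. -/
open Set

theorem projection_intertwining
    {E : Type*} [NormedAddCommGroup E] [InnerProductSpace ℂ E] [FiniteDimensional ℂ E]
    (P P' : ℝ → (E →L[ℂ] E))
    (hPd : ∀ t : ℝ, HasDerivAt P (P' t) t)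
    (hP'c : Continuous P')
    (hproj : ∀ t : ℝ, P t ∘L P t = P t)
    (Q : ℝ → (E →L[ℂ] E))
    (hQ : ∀ t : ℝ, Q t = P' t ∘L P t - P t ∘L P' t)
    (U : ℝ → (E →L[ℂ] E))
    (hU : ∀ t : ℝ, HasDerivAt U (Q t ∘L U t) t)
    (hU0 : U 0 = 1) :
    ∀ t ∈ Icc (0:ℝ) 1, P t ∘L U t = U t ∘L P 0 := by
  -- composition is multiplication in the ring of continuous linear maps
  have hmul : ∀ (a b : E →L[ℂ] E), a ∘L b = a * b := fun a b => rfl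
  have hB : ∀ t : ℝ, P t * P t = P t := hproj
  -- key identity: P' t * P t + P t * P' t = P' t
  have h1 : ∀ t : ℝ, P' t * P t + P t * P' t = P' t := by
    intro t
    have hd : HasDerivAt (fun s => P s * P s) (P' t * P t + P t * P' t) t :=
      (hPd t).mul (hPd t)
    have hfun : (fun s => P s * P s) = P := funext hB
    rw [hfun] at hd
    exact (hd.unique (hPd t))
  -- hence P t * P' t * P t = 0
  have h2 : ∀ t : ℝ, P t * P' t * P t = 0 := by
    intro t
    have := congrArg (fun X => P t * X * P t) (h1 t)
    simp only [mul_add, add_mul, mul_assoc, hB t] at this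
    -- this : a + a = a
    have h3 : P t * (P t * (P' t * P t)) = P t * (P' t * P t) := by
      rw [← mul_assoc, hB t]
    rw [h3] at this
    have h4 : P t * (P' t * P t) = 0 :=
      add_left_cancel (this.trans (add_zero _).symm)
    rw [mul_assoc]; exact h4
  -- key operator identity: Q t * P t = P t * Q t + P' t
  have hkey : ∀ t : ℝ, Q t * P t = P t * Q t + P' t := by
    intro t
    have hQ' : Q t = P' t * P t - P t * P' t := hQ t
    have l : Q t * P t = P' t * P t := by
      rw [hQ', sub_mul, mul_assoc, hB t, h2 t, sub_zero]
    have r : P t * Q t + P' t = P' t * P t := by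
      rw [hQ', mul_sub, ← mul_assoc, ← mul_assoc, h2 t, hB t, zero_sub,
        eq_sub_of_add_eq (h1 t)]
      abel
    rw [l, r]
  -- the difference W satisfies W' = Q W, W 0 = 0
  set W : ℝ → (E →L[ℂ] E) := fun t => P t * U t - U t * P 0 with hW
  have hWd : ∀ t : ℝ, HasDerivAt W (Q t * W t) t := by
    intro t
    have d1 : HasDerivAt (fun s => P s * U s) (P' t * U t + P t * (Q t * U t)) t :=
      (hPd t).mul (hU t)
    have d2 : HasDerivAt (fun s => U s * P 0) (Q t * U t * P 0 + U t * 0) t :=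
      (hU t).mul (hasDerivAt_const t (P 0))
    have d := d1.sub d2
    convert d using 1
    case e'_4 => rfl
    case e'_5 => rfl
    case e'_6 => rfl
    case e'_8 => rfl
    rw [hW]
    simp only [mul_zero, add_zero]
    rw [mul_sub, ← mul_assoc, hkey t]
    noncomm_ring
  have hW0 : W 0 = 0 := by simp [hW, hU0, hmul]
  -- continuity facts
  have hPc : Continuous P := by
    rw [continuous_iff_continuousAt]; exact fun t => (hPd t).continuousAt
  have hQc : Continuous Q := by
    have : Q = fun t => P' t * P t - P t * P' t := funext hQ
    rw [this]
    exact (hP'c.mul hPc).sub (hPc.mul hP'c)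
  -- bound on Q over [0,1]
  obtain ⟨C, hC⟩ := isCompact_Icc.exists_bound_of_continuousOn
    (s := Icc (0:ℝ) 1) hQc.continuousOn
  set K : NNReal := Real.toNNReal C with hK
  -- clamp time into [0,1]
  set pr : ℝ → ℝ := fun t => max 0 (min t 1) with hpr
  have hprmem : ∀ t : ℝ, pr t ∈ Icc (0:ℝ) 1 := by
    intro t
    constructor
    · exact le_max_left _ _
    · exact max_le (by norm_num) (min_le_right _ _)
  have hpreq : ∀ t ∈ Icc (0:ℝ) 1, pr t = t := by
    intro t ht
    rw [hpr]
    simp only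
    rw [min_eq_left ht.2, max_eq_right ht.1]
  set v : ℝ → (E →L[ℂ] E) → (E →L[ℂ] E) := fun t x => Q (pr t) * x with hv
  have hvL : ∀ t : ℝ, LipschitzWith K (v t) := by
    intro t
    apply LipschitzWith.of_dist_le_mul
    intro x y
    rw [dist_eq_norm, dist_eq_norm, hv]
    simp only
    rw [← mul_sub]
    calc ‖Q (pr t) * (x - y)‖ ≤ ‖Q (pr t)‖ * ‖x - y‖ := norm_mul_le _ _
      _ ≤ (K : ℝ) * ‖x - y‖ := by
          apply mul_le_mul_of_nonneg_right _ (norm_nonneg _)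
          exact le_trans (hC _ (hprmem t)) (Real.le_coe_toNNReal C)
  -- uniqueness of the ODE solution: W = 0 on [0,1]
  have hWeq : EqOn W (fun _ => (0 : E →L[ℂ] E)) (Icc (0:ℝ) 1) := by
    apply ODE_solution_unique (v := v) hvL
    · exact fun t _ => ((hWd t).continuousAt).continuousWithinAt
    · intro t ht
      have : v t (W t) = Q t * W t := by
        rw [hv]; simp only; rw [hpreq t (Ico_subset_Icc_self ht)]
      rw [this]
      exact (hWd t).hasDerivWithinAt
    · exact continuousOn_const
    · intro t ht
      have : v t ((fun _ => (0 : E →L[ℂ] E)) t) = 0 := by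
        rw [hv]; simp
      rw [this]
      exact (hasDerivAt_const t _).hasDerivWithinAt
    · simpa using hW0
  intro t ht
  have := hWeq ht
  rw [hW] at this
  simp only at this
  have : P t * U t = U t * P 0 := by
    have h := sub_eq_zero.mp this
    exact h
  rw [hmul, hmul]
  exact this
end

section
/- Let P : [0,1] → L(H) be a continuously differentiable family of projections and suppose φ₀ ∈ H satisfies P(0)φ₀ = φ₀. If U solves U'(t) = Q(t)U(t) with U(0) = I and Q(t) = P'(t)P(t) − P(t)P'(t), then φ(t) := U(t)φ₀ satisfies P(t)φ(t) = φ(t) for all t ∈ [0,1]. -/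
open Set

theorem transported_vector_stays_in_range
    {E : Type*} [NormedAddCommGroup E] [InnerProductSpace ℂ E] [FiniteDimensional ℂ E]
    (P P' : ℝ → (E →L[ℂ] E))
    (hPd : ∀ t : ℝ, HasDerivAt P (P' t) t)
    (hP'c : Continuous P')
    (hproj : ∀ t : ℝ, P t ∘L P t = P t)
    (Q : ℝ → (E →L[ℂ] E))
    (hQ : ∀ t : ℝ, Q t = P' t ∘L P t - P t ∘L P' t)
    (U : ℝ → (E →L[ℂ] E))
    (hU : ∀ t : ℝ, HasDerivAt U (Q t ∘L U t) t)
    (hU0 : U 0 = 1)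
    (φ₀ : E) (hφ₀ : P 0 φ₀ = φ₀) :
    ∀ t ∈ Icc (0:ℝ) 1, P t (U t φ₀) = U t φ₀ := by
  -- Leibniz rule consequence: P'P + PP' = P'
  have hLeib : ∀ t, P' t * P t + P t * P' t = P' t := by
    intro t
    have h1 : HasDerivAt (fun s => P s * P s) (P' t * P t + P t * P' t) t :=
      (hPd t).mul (hPd t)
    have h2 : (fun s => P s * P s) = P := by funext s; exact hproj s
    rw [h2] at h1
    exact h1.unique (hPd t)
  have hQm : ∀ t, Q t = P' t * P t - P t * P' t := hQ
  -- key operator identity: Q P - P Q = P'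
  have hkey : ∀ t, Q t * P t - P t * Q t = P' t := by
    intro t
    have hp : P t * P t = P t := hproj t
    have hl := hLeib t
    have h0 : P t * P' t * P t = 0 := by
      have h := congrArg (fun A => P t * A) hl
      simp only [mul_add, ← mul_assoc, hp] at h
      exact add_eq_right.mp h
    have expand : Q t * P t - P t * Q t =
        P' t * (P t * P t) - P t * P' t * P t - (P t * P' t * P t)
          + (P t * P t) * P' t := by
      rw [hQm]; noncomm_ring
    rw [expand, hp, h0, sub_zero, sub_zero]
    exact hl
  -- the vector ψ
  set ψ : ℝ → E := fun t => P t (U t φ₀) - U t φ₀ with hψdef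
  -- derivative of t ↦ U t φ₀
  have hUφ : ∀ t, HasDerivAt (fun s => U s φ₀) ((Q t ∘L U t) φ₀) t := fun t =>
    ((ContinuousLinearMap.apply ℂ E φ₀).restrictScalars ℝ).hasFDerivAt.comp_hasDerivAt t (hU t)
  have hPUφ : ∀ t, HasDerivAt (fun s => P s (U s φ₀))
      (P' t (U t φ₀) + P t ((Q t ∘L U t) φ₀)) t := by
    intro t
    have h1 : HasDerivAt (fun s => P s ∘L U s)
        (P' t ∘L U t + P t ∘L (Q t ∘L U t)) t := by
      have := (hPd t).mul (hU t)
      exact this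
    have := ((ContinuousLinearMap.apply ℂ E φ₀).restrictScalars ℝ).hasFDerivAt.comp_hasDerivAt
      t h1
    simpa [Function.comp_def] using this
  -- ψ satisfies ψ' = Q ψ
  have hψd : ∀ t, HasDerivAt ψ (Q t (ψ t)) t := by
    intro t
    have h := (hPUφ t).sub (hUφ t)
    convert h using 1
    · rfl
    have : Q t (ψ t) = (Q t ∘L P t) (U t φ₀) - (Q t ∘L U t) φ₀ := by
      simp [hψdef, map_sub]
    rw [this]
    have h2 : Q t ∘L P t = P' t + P t ∘L Q t := by
      have := hkey t
      have : Q t * P t = P' t + P t * Q t := by rw [← this]; noncomm_ring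
      simpa [ContinuousLinearMap.mul_def] using this
    rw [h2]
    simp [ContinuousLinearMap.add_apply]
  -- ψ 0 = 0
  have hψ0 : ψ 0 = 0 := by
    simp [hψdef, hU0, hφ₀]
  -- bound on Q on [0,1]
  have hPc : Continuous P := by
    rw [continuous_iff_continuousAt]; exact fun t => (hPd t).continuousAt
  have hQc : Continuous Q := by
    have : Continuous fun t => P' t * P t - P t * P' t := by
      exact (hP'c.mul hPc).sub (hPc.mul hP'c)
    have hfun : Q = fun t => P' t * P t - P t * P' t := funext hQm
    rw [hfun]; exact this
  obtain ⟨C, hC⟩ := (isCompact_Icc (a := (0:ℝ)) (b := 1)).exists_bound_of_continuousOn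
    (hQc.norm.continuousOn)
  -- Gronwall
  have hψc : ContinuousOn ψ (Icc 0 1) := fun t _ => ((hψd t).continuousAt).continuousWithinAt
  have gron := norm_le_gronwallBound_of_norm_deriv_right_le (δ := 0) (K := C) (ε := 0)
    (f := ψ) (f' := fun t => Q t (ψ t)) (a := 0) (b := 1) hψc
    (fun t _ => (hψd t).hasDerivWithinAt)
    (by rw [hψ0]; simp)
    (fun t ht => by
      calc ‖Q t (ψ t)‖ ≤ ‖Q t‖ * ‖ψ t‖ := (Q t).le_opNorm _
        _ ≤ C * ‖ψ t‖ + 0 := by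
            rw [add_zero]
            exact mul_le_mul_of_nonneg_right (by rw [← norm_norm (Q t)]; exact hC t (Ico_subset_Icc_self ht)) (norm_nonneg _))
  intro t ht
  have := gron t ht
  rw [gronwallBound_ε0, zero_mul] at this
  exact sub_eq_zero.mp (norm_le_zero_iff.mp this)
end

section
/- If H : [0,1] → L(ℂⁿ) is a continuously differentiable family of Hermitian operators such that for each t the lowest eigenvalue λ₀(t) is separated from the rest of the spectrum by a uniform gap δ > 0, then there exists a continuous map φ* : [0,1] → ℂⁿ with ‖φ*(t)‖ = 1 and H(t)φ*(t) = λ₀(t)φ*(t) for all t ∈ [0,1]. -/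
open Set Complex Metric Module

namespace ContGS

variable {n : ℕ}

local notation "E'" => EuclideanSpace ℂ (Fin n)
local notation "CLM" => EuclideanSpace ℂ (Fin n) →L[ℂ] EuclideanSpace ℂ (Fin n)

/-- Gap hypothesis for a single operator. -/
def Gap (A : CLM) (l δ : ℝ) : Prop :=
  ∀ μ : ℂ, Module.End.HasEigenvalue (A : E' →ₗ[ℂ] E') μ → μ = (l:ℂ) ∨ l + δ < μ.re

theorem not_eig_sphere {A : CLM} {l δ : ℝ} (hg : Gap A l δ) (hδ : 0 < δ) {z : ℂ}
    (hz : z ∈ Metric.sphere (l:ℂ) (δ/2)) :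
    ¬ Module.End.HasEigenvalue (A : E' →ₗ[ℂ] E') z := by
  intro h
  have hd : dist z (l:ℂ) = δ/2 := hz
  rw [Complex.dist_eq] at hd
  rcases hg z h with h1 | h1
  · rw [h1] at hd; simp at hd; linarith
  · have : (z - (l:ℂ)).re ≤ ‖z - (l:ℂ)‖ := (abs_le.mp (Complex.abs_re_le_norm _)).2
    rw [hd] at this
    simp only [Complex.sub_re, Complex.ofReal_re] at this
    linarith

theorem isUnit_sub {A : CLM} {l δ : ℝ} (hg : Gap A l δ) (hδ : 0 < δ) {z : ℂ}
    (hz : z ∈ Metric.sphere (l:ℂ) (δ/2)) :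
    IsUnit (z • (1 : CLM) - A) := by
  set B : CLM := z • (1 : CLM) - A with hB
  have hinj : Function.Injective B := by
    intro u v huv
    by_contra hne
    have hw : B (u - v) = 0 := by rw [map_sub, huv, sub_self]
    have hAw : (A : E' →ₗ[ℂ] E') (u - v) = z • (u - v) := by
      have : z • (u - v) - A (u - v) = 0 := by
        simpa [hB, ContinuousLinearMap.sub_apply, ContinuousLinearMap.smul_apply] using hw
      have := sub_eq_zero.mp this
      simpa using this.symm
    have heig : Module.End.HasEigenvalue (A : E' →ₗ[ℂ] E') z := by
      apply Module.End.hasEigenvalue_of_hasEigenvector (x := u - v)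
      refine ⟨Module.End.mem_eigenspace_iff.mpr hAw, sub_ne_zero.mpr hne⟩
    exact not_eig_sphere hg hδ hz heig
  have hsurj : Function.Surjective B :=
    (LinearMap.injective_iff_surjective (f := (B : E' →ₗ[ℂ] E'))).mp hinj
  let e : E' ≃ₗ[ℂ] E' := LinearEquiv.ofBijective (B : E' →ₗ[ℂ] E') ⟨hinj, hsurj⟩
  let eC : E' ≃L[ℂ] E' := e.toContinuousLinearEquiv
  refine ⟨(ContinuousLinearEquiv.unitsEquiv ℂ E').symm eC, ?_⟩
  ext x
  rfl

theorem inverse_apply {A : CLM} {z μ : ℂ} (hu : IsUnit (z • (1 : CLM) - A))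
    {v : E'} (hv : A v = μ • v) (hne : z ≠ μ) :
    Ring.inverse (z • (1 : CLM) - A) v = (z - μ)⁻¹ • v := by
  obtain ⟨u, hu'⟩ := hu
  rw [← hu', Ring.inverse_unit]
  have h1 : (u : CLM) v = (z - μ) • v := by
    rw [hu']
    simp [ContinuousLinearMap.sub_apply, ContinuousLinearMap.smul_apply, hv, sub_smul]
  have h2 : ((u⁻¹ : (CLM)ˣ) : CLM) ((u : CLM) v) = v := by
    rw [← ContinuousLinearMap.mul_apply, Units.inv_mul, ContinuousLinearMap.one_apply]
  rw [h1, map_smul] at h2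
  have hzμ : z - μ ≠ 0 := sub_ne_zero.mpr hne
  rw [eq_comm, inv_smul_eq_iff₀ hzμ]
  exact h2.symm


noncomputable def Q (A : CLM) (l δ : ℝ) : CLM :=
  (2 * Real.pi * Complex.I : ℂ)⁻¹ • ∮ z in C((l:ℂ), δ/2), Ring.inverse (z • (1 : CLM) - A)

theorem integrand_cont {A : CLM} {l δ : ℝ} (hg : Gap A l δ) (hδ : 0 < δ) :
    Continuous fun θ : ℝ =>
      Ring.inverse ((circleMap (l:ℂ) (δ/2) θ) • (1 : CLM) - A) := by
  rw [continuous_iff_continuousAt]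
  intro θ
  have hu := isUnit_sub hg hδ (circleMap_mem_sphere (l:ℂ) (by positivity : (0:ℝ) ≤ δ/2) θ)
  have h1 : ContinuousAt (fun θ : ℝ => (circleMap (l:ℂ) (δ/2) θ) • (1 : CLM) - A) θ := by
    exact (((continuous_circleMap _ _).smul continuous_const).sub continuous_const).continuousAt
  have h2 : ContinuousAt Ring.inverse ((circleMap (l:ℂ) (δ/2) θ) • (1 : CLM) - A) := by
    have := NormedRing.inverse_continuousAt hu.unit
    rwa [hu.unit_spec] at this
  exact ContinuousAt.comp (g := Ring.inverse) h2 h1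

theorem Q_apply_eigvec {A : CLM} {l δ : ℝ} (hg : Gap A l δ) (hδ : 0 < δ)
    {v : E'} {μ : ℂ} (hv : A v = μ • v)
    (hne : ∀ θ : ℝ, circleMap (l:ℂ) (δ/2) θ ≠ μ) :
    Q A l δ v = ((2 * Real.pi * Complex.I : ℂ)⁻¹ *
      ∮ z in C((l:ℂ), δ/2), (z - μ)⁻¹) • v := by
  have hR : (0:ℝ) < δ/2 := by positivity
  have hint : IntervalIntegrable
      (fun θ : ℝ => deriv (circleMap (l:ℂ) (δ/2)) θ •
        Ring.inverse ((circleMap (l:ℂ) (δ/2) θ) • (1 : CLM) - A)) MeasureTheory.volume 0 (2*Real.pi) := by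
    apply Continuous.intervalIntegrable
    simp only [deriv_circleMap]
    exact ((continuous_circleMap 0 _).mul continuous_const).smul (integrand_cont hg hδ)
  unfold Q circleIntegral
  rw [ContinuousLinearMap.smul_apply, ContinuousLinearMap.intervalIntegral_apply hint v]
  have hcong : ∀ θ : ℝ,
      (deriv (circleMap (l:ℂ) (δ/2)) θ •
        Ring.inverse ((circleMap (l:ℂ) (δ/2) θ) • (1 : CLM) - A)) v
      = (deriv (circleMap (l:ℂ) (δ/2)) θ * (circleMap (l:ℂ) (δ/2) θ - μ)⁻¹) • v := by
    intro θ
    have hz := circleMap_mem_sphere (l:ℂ) hR.le θ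
    rw [ContinuousLinearMap.smul_apply, inverse_apply (isUnit_sub hg hδ hz) hv (hne θ), smul_smul]
  rw [intervalIntegral.integral_congr (g := fun θ : ℝ =>
      (deriv (circleMap (l:ℂ) (δ/2)) θ * (circleMap (l:ℂ) (δ/2) θ - μ)⁻¹) • v)
      (fun θ _ => hcong θ)]
  rw [intervalIntegral.integral_smul_const, smul_smul]
  congr 1

theorem Q_fixed {A : CLM} {l δ : ℝ} (hg : Gap A l δ) (hδ : 0 < δ)
    {v : E'} (hv : A v = (l:ℂ) • v) : Q A l δ v = v := by
  have hR : (0:ℝ) < δ/2 := by positivity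
  have hne : ∀ θ : ℝ, circleMap (l:ℂ) (δ/2) θ ≠ (l:ℂ) := fun θ => circleMap_ne_center hR.ne'
  rw [Q_apply_eigvec hg hδ hv hne,
    circleIntegral.integral_sub_inv_of_mem_ball (Metric.mem_ball_self hR),
    inv_mul_cancel₀ two_pi_I_ne_zero, one_smul]

theorem Q_zero_of_far {A : CLM} {l δ : ℝ} (hg : Gap A l δ) (hδ : 0 < δ)
    {v : E'} {m : ℝ} (hv : A v = ((m:ℝ):ℂ) • v) (hm : l + δ < m) :
    Q A l δ v = 0 := by
  have hR : (0:ℝ) < δ/2 := by positivity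
  have hfar : ∀ z : ℂ, z ∈ Metric.closedBall (l:ℂ) (δ/2) → z ≠ ((m:ℝ):ℂ) := by
    intro z hz hzm
    have : dist z (l:ℂ) ≤ δ/2 := hz
    rw [hzm, Complex.dist_eq, ← Complex.ofReal_sub, Complex.norm_real, Real.norm_eq_abs] at this
    have : |m - l| ≤ δ/2 := this
    rw [abs_le] at this
    linarith [this.2]
  have hne : ∀ θ : ℝ, circleMap (l:ℂ) (δ/2) θ ≠ ((m:ℝ):ℂ) := fun θ =>
    hfar _ (circleMap_mem_closedBall (l:ℂ) hR.le θ)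
  rw [Q_apply_eigvec hg hδ hv hne]
  have hzero : (∮ z in C((l:ℂ), δ/2), (z - ((m:ℝ):ℂ))⁻¹) = 0 := by
    apply Complex.circleIntegral_eq_zero_of_differentiable_on_off_countable hR.le
      Set.countable_empty
    · intro z hz
      exact (ContinuousAt.continuousWithinAt (by
        have hzm := hfar z hz
        exact ((continuous_id.sub continuous_const).continuousAt).inv₀
          (sub_ne_zero.mpr hzm)))
    · intro z hz
      have hzm := hfar z (Metric.ball_subset_closedBall hz.1)
      exact (differentiableAt_id.sub (differentiableAt_const _)).inv (sub_ne_zero.mpr hzm)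
  rw [hzero, mul_zero, zero_smul]

theorem Q_eigen {A : CLM} {l δ : ℝ} (hA : IsSelfAdjoint A) (hg : Gap A l δ) (hδ : 0 < δ)
    (v : E') : A (Q A l δ v) = (l:ℂ) • Q A l δ v := by
  have hS : (A : E' →ₗ[ℂ] E').IsSymmetric :=
    (ContinuousLinearMap.isSelfAdjoint_iff_isSymmetric).mp hA
  have hrank : Module.finrank ℂ E' = n := finrank_euclideanSpace_fin
  set B := hS.eigenvectorBasis hrank with hBdef
  set ν := hS.eigenvalues hrank with hνdef
  have hvB : ∀ i, A (B i) = ((ν i : ℝ) : ℂ) • B i := fun i =>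
    hS.apply_eigenvectorBasis hrank i
  have hbasis : ∀ i, Q A l δ (B i) = if ν i = l then B i else 0 := by
    intro i
    by_cases h : ν i = l
    · rw [if_pos h]
      have hv := hvB i
      rw [h] at hv
      exact Q_fixed hg hδ hv
    · rw [if_neg h]
      have heig : Module.End.HasEigenvalue (A : E' →ₗ[ℂ] E') ((ν i : ℝ) : ℂ) :=
        hS.hasEigenvalue_eigenvalues hrank i
      have hgt : l + δ < ν i := by
        rcases hg _ heig with h1 | h1
        · exact absurd (Complex.ofReal_inj.mp h1) h
        · simpa using h1
      exact Q_zero_of_far hg hδ (hvB i) hgt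
  have hrepr : ∀ w : E', Q A l δ w = ∑ i, B.repr w i • Q A l δ (B i) := by
    intro w
    conv_lhs => rw [← B.sum_repr w]
    rw [map_sum]
    simp only [map_smul]
  rw [hrepr v, map_sum, Finset.smul_sum]
  apply Finset.sum_congr rfl
  intro i _
  rw [map_smul, hbasis i]
  by_cases h : ν i = l
  · rw [if_pos h]
    have hv := hvB i
    rw [h] at hv
    rw [hv, smul_comm]
  · rw [if_neg h]
    simp


theorem rayleigh_lower {A : CLM} {l δ : ℝ} (hA : IsSelfAdjoint A) (hg : Gap A l δ)
    (hδ : 0 < δ) (v : E') : l * ‖v‖^2 ≤ (inner ℂ v (A v) : ℂ).re := by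
  have hS : (A : E' →ₗ[ℂ] E').IsSymmetric :=
    (ContinuousLinearMap.isSelfAdjoint_iff_isSymmetric).mp hA
  have hrank : Module.finrank ℂ E' = n := finrank_euclideanSpace_fin
  set B := hS.eigenvectorBasis hrank with hBdef
  set ν := hS.eigenvalues hrank with hνdef
  have hkey : (inner ℂ v (A v) : ℂ) = ∑ i, ((ν i : ℝ) : ℂ) * ((‖B.repr v i‖:ℝ)^2 : ℂ) := by
    rw [← B.repr.inner_map_map v (A v)]
    rw [PiLp.inner_apply]
    apply Finset.sum_congr rfl
    intro i _
    rw [RCLike.inner_apply]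
    have : B.repr (A v) i = (ν i : ℂ) * B.repr v i :=
      hS.eigenvectorBasis_apply_self_apply hrank v i
    rw [this, mul_comm ((ν i : ℝ):ℂ) (B.repr v i), mul_right_comm, RCLike.mul_conj, mul_comm]
    norm_cast
    simp [Complex.ofReal_mul, RCLike.ofReal_alg]
  have hre : (inner ℂ v (A v) : ℂ).re = ∑ i, (ν i) * ‖B.repr v i‖^2 := by
    rw [hkey, Complex.re_sum]
    apply Finset.sum_congr rfl
    intro i _
    rw [← Complex.ofReal_pow, ← Complex.ofReal_mul, Complex.ofReal_re]
  have hnorm : ‖v‖^2 = ∑ i, ‖B.repr v i‖^2 := by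
    rw [← B.repr.norm_map v, EuclideanSpace.norm_eq]
    rw [Real.sq_sqrt (Finset.sum_nonneg fun i _ => sq_nonneg _)]
  rw [hre, hnorm, Finset.mul_sum]
  apply Finset.sum_le_sum
  intro i _
  apply mul_le_mul_of_nonneg_right _ (sq_nonneg _)
  have heig : Module.End.HasEigenvalue (A : E' →ₗ[ℂ] E') ((ν i : ℝ) : ℂ) :=
    hS.hasEigenvalue_eigenvalues hrank i
  rcases hg _ heig with h1 | h1
  · exact le_of_eq (Complex.ofReal_inj.mp h1).symm
  · simp only [Complex.ofReal_re] at h1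
    linarith

theorem lower_le_shift {A₁ A₂ : CLM} {l₁ l₂ δ : ℝ} (hA₂ : IsSelfAdjoint A₂)
    (hg₂ : Gap A₂ l₂ δ) (hδ : 0 < δ)
    {v : E'} (hv : A₁ v = (l₁:ℂ) • v) (hnv : ‖v‖ = 1) : l₂ ≤ l₁ + ‖A₂ - A₁‖ := by
  have h1 := rayleigh_lower hA₂ hg₂ hδ v
  rw [hnv] at h1
  simp only [one_pow, mul_one] at h1
  have hsplit : A₂ v = A₁ v + (A₂ - A₁) v := by
    simp [ContinuousLinearMap.sub_apply]
  have h2 : (inner ℂ v (A₂ v) : ℂ) = inner ℂ v (A₁ v) + inner ℂ v ((A₂ - A₁) v) := by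
    rw [hsplit, inner_add_right]
  have h3 : (inner ℂ v (A₁ v) : ℂ).re = l₁ := by
    rw [hv, inner_smul_right]
    rw [inner_self_eq_norm_sq_to_K, hnv]
    simp
  have h4 : (inner ℂ v ((A₂ - A₁) v) : ℂ).re ≤ ‖A₂ - A₁‖ := by
    calc (inner ℂ v ((A₂ - A₁) v) : ℂ).re ≤ ‖(inner ℂ v ((A₂ - A₁) v) : ℂ)‖ :=
          Complex.re_le_norm _
      _ = ‖(inner ℂ v ((A₂ - A₁) v) : ℂ)‖ := rfl
      _ ≤ ‖v‖ * ‖(A₂ - A₁) v‖ := norm_inner_le_norm _ _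
      _ ≤ ‖v‖ * (‖A₂ - A₁‖ * ‖v‖) := by
          apply mul_le_mul_of_nonneg_left ((A₂ - A₁).le_opNorm v) (norm_nonneg _)
      _ = ‖A₂ - A₁‖ := by rw [hnv]; ring
  have : (inner ℂ v (A₂ v) : ℂ).re = (inner ℂ v (A₁ v) : ℂ).re + (inner ℂ v ((A₂ - A₁) v) : ℂ).re := by
    rw [h2, Complex.add_re]
  linarith


theorem continuousOn_union_isClosed {α β : Type*} [TopologicalSpace α] [TopologicalSpace β]
    {f : α → β} {s t : Set α} (hs : IsClosed s) (ht : IsClosed t)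
    (hf : ContinuousOn f s) (hg : ContinuousOn f t) : ContinuousOn f (s ∪ t) := by
  intro x hx
  have h1 : ContinuousWithinAt f s x := by
    rcases em (x ∈ s) with h | h
    · exact hf x h
    · exact continuousWithinAt_of_notMem_closure (by rwa [hs.closure_eq])
  have h2 : ContinuousWithinAt f t x := by
    rcases em (x ∈ t) with h | h
    · exact hg x h
    · exact continuousWithinAt_of_notMem_closure (by rwa [ht.closure_eq])
  exact h1.union h2

theorem unit_eigenvector {A : CLM} {μ : ℂ}
    (h : Module.End.HasEigenvalue (A : E' →ₗ[ℂ] E') μ) :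
    ∃ v : E', ‖v‖ = 1 ∧ A v = μ • v := by
  obtain ⟨v, hv⟩ := h.exists_hasEigenvector
  have hv0 : v ≠ 0 := hv.2
  have hvn : ‖v‖ ≠ 0 := norm_ne_zero_iff.mpr hv0
  have happ : A v = μ • v := by
    have := hv.apply_eq_smul
    simpa using this
  refine ⟨((‖v‖:ℝ):ℂ)⁻¹ • v, ?_, ?_⟩
  · have hns : ‖(((‖v‖:ℝ):ℂ))⁻¹‖ = ‖v‖⁻¹ := by
      rw [norm_inv, Complex.norm_real, Real.norm_eq_abs, _root_.abs_of_nonneg (norm_nonneg v)]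
    rw [norm_smul, hns, inv_mul_cancel₀ hvn]
  · rw [map_smul, happ, smul_comm]

end ContGS

open ContGS

theorem continuous_ground_state
    {n : ℕ}
    (T T' : ℝ → (EuclideanSpace ℂ (Fin n) →L[ℂ] EuclideanSpace ℂ (Fin n)))
    (hTd : ∀ t : ℝ, HasDerivAt T (T' t) t)
    (hT'c : Continuous T')
    (hsa : ∀ t ∈ Icc (0:ℝ) 1, IsSelfAdjoint (T t))
    (lam0 : ℝ → ℝ) (δ : ℝ) (hδ : 0 < δ)
    (hlow : ∀ t ∈ Icc (0:ℝ) 1,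
      Module.End.HasEigenvalue
        (T t : EuclideanSpace ℂ (Fin n) →ₗ[ℂ] EuclideanSpace ℂ (Fin n)) ((lam0 t : ℝ) : ℂ))
    (hgap : ∀ t ∈ Icc (0:ℝ) 1, ∀ μ : ℂ,
      Module.End.HasEigenvalue
        (T t : EuclideanSpace ℂ (Fin n) →ₗ[ℂ] EuclideanSpace ℂ (Fin n)) μ →
      μ = ((lam0 t : ℝ) : ℂ) ∨ lam0 t + δ < μ.re) :
    ∃ φ : ℝ → EuclideanSpace ℂ (Fin n),
      ContinuousOn φ (Icc (0:ℝ) 1) ∧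
      ∀ t ∈ Icc (0:ℝ) 1, ‖φ t‖ = 1 ∧ T t (φ t) = ((lam0 t : ℝ) : ℂ) • φ t := by
  classical
  set σ : ℝ → ℝ := fun t => max 0 (min 1 t) with hσdef
  have hσmem : ∀ t, σ t ∈ Icc (0:ℝ) 1 := fun t =>
    ⟨le_max_left _ _, max_le (by norm_num) (min_le_left _ _)⟩
  have hσeq : ∀ t ∈ Icc (0:ℝ) 1, σ t = t := by
    intro t ht
    simp only [hσdef]
    rw [min_eq_right ht.2, max_eq_right ht.1]
  have hσc : Continuous σ := continuous_const.max (continuous_const.min continuous_id)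
  set S : ℝ → (EuclideanSpace ℂ (Fin n) →L[ℂ] EuclideanSpace ℂ (Fin n)) :=
    fun t => T (σ t) with hSdef
  set l : ℝ → ℝ := fun t => lam0 (σ t) with hldef
  have hTc : Continuous T := continuous_iff_continuousAt.mpr fun t => (hTd t).continuousAt
  have hSc : Continuous S := hTc.comp hσc
  have hsa' : ∀ t, IsSelfAdjoint (S t) := fun t => hsa _ (hσmem t)
  have hlow' : ∀ t, Module.End.HasEigenvalue
      (S t : EuclideanSpace ℂ (Fin n) →ₗ[ℂ] EuclideanSpace ℂ (Fin n)) ((l t : ℝ) : ℂ) :=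
    fun t => hlow _ (hσmem t)
  have hgap' : ∀ t, Gap (S t) (l t) δ := fun t μ h => hgap _ (hσmem t) μ h
  -- Lipschitz-type bound for l
  have hldiff : ∀ s t : ℝ, l s ≤ l t + ‖S s - S t‖ := by
    intro s t
    obtain ⟨v, hv1, hv2⟩ := unit_eigenvector (hlow' t)
    exact lower_le_shift (hsa' s) (hgap' s) hδ hv2 hv1
  have hlc : Continuous l := by
    rw [Metric.continuous_iff]
    intro t ε hε
    obtain ⟨d, hd0, hd⟩ := Metric.continuous_iff.mp hSc t ε hε
    refine ⟨d, hd0, fun s hs => ?_⟩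
    have h1 := hldiff s t
    have h2 := hldiff t s
    rw [norm_sub_rev] at h2
    have h3 : dist (S s) (S t) < ε := hd s hs
    rw [dist_eq_norm] at h3
    rw [Real.dist_eq, abs_sub_lt_iff]
    constructor <;> linarith
  -- the spectral projection family
  set P : ℝ → (EuclideanSpace ℂ (Fin n) →L[ℂ] EuclideanSpace ℂ (Fin n)) :=
    fun t => Q (S t) (l t) δ with hPdef
  have hPfix : ∀ t (v : EuclideanSpace ℂ (Fin n)), S t v = ((l t : ℝ):ℂ) • v → P t v = v :=
    fun t v h => Q_fixed (hgap' t) hδ h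
  have hPeig : ∀ t (v : EuclideanSpace ℂ (Fin n)),
      S t (P t v) = ((l t : ℝ):ℂ) • P t v :=
    fun t v => Q_eigen (hsa' t) (hgap' t) hδ v
  -- continuity of P
  have hPc : Continuous P := by
    have hrw : P = fun t => (2 * Real.pi * Complex.I : ℂ)⁻¹ •
        ∫ θ in (0:ℝ)..(2*Real.pi), (deriv (circleMap ((l t : ℝ):ℂ) (δ/2)) θ •
          Ring.inverse ((circleMap ((l t : ℝ):ℂ) (δ/2) θ) • (1 : EuclideanSpace ℂ (Fin n) →L[ℂ]
            EuclideanSpace ℂ (Fin n)) - S t)) := by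
      funext t
      rfl
    rw [hrw]
    apply Continuous.fun_smul continuous_const
    apply intervalIntegral.continuous_parametric_intervalIntegral_of_continuous' (μ := MeasureTheory.volume)
    have hcm : Continuous fun p : ℝ × ℝ => circleMap ((l p.1 : ℝ):ℂ) (δ/2) p.2 := by
      have : (fun p : ℝ × ℝ => circleMap ((l p.1 : ℝ):ℂ) (δ/2) p.2)
          = fun p : ℝ × ℝ => ((l p.1 : ℝ):ℂ) + ((δ/2 : ℝ):ℂ) * Complex.exp ((p.2:ℝ) * Complex.I) := by
        funext p
        rfl
      rw [this]
      exact (Complex.continuous_ofReal.comp (hlc.comp continuous_fst)).add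
        (continuous_const.mul (Complex.continuous_exp.comp
          ((Complex.continuous_ofReal.comp continuous_snd).mul continuous_const)))
    have hG : Continuous fun p : ℝ × ℝ =>
        (circleMap ((l p.1 : ℝ):ℂ) (δ/2) p.2) • (1 : EuclideanSpace ℂ (Fin n) →L[ℂ]
          EuclideanSpace ℂ (Fin n)) - S p.1 :=
      (hcm.smul continuous_const).sub (hSc.comp continuous_fst)
    have hinv : Continuous fun p : ℝ × ℝ =>
        Ring.inverse ((circleMap ((l p.1 : ℝ):ℂ) (δ/2) p.2) • (1 : EuclideanSpace ℂ (Fin n) →L[ℂ]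
          EuclideanSpace ℂ (Fin n)) - S p.1) := by
      rw [continuous_iff_continuousAt]
      intro p
      have hu := isUnit_sub (hgap' p.1) hδ
        (circleMap_mem_sphere ((l p.1 : ℝ):ℂ) (by positivity : (0:ℝ) ≤ δ/2) p.2)
      have h2 : ContinuousAt Ring.inverse ((circleMap ((l p.1 : ℝ):ℂ) (δ/2) p.2) •
          (1 : EuclideanSpace ℂ (Fin n) →L[ℂ] EuclideanSpace ℂ (Fin n)) - S p.1) := by
        have := NormedRing.inverse_continuousAt hu.unit
        rwa [hu.unit_spec] at this
      exact ContinuousAt.comp (g := Ring.inverse) h2 hG.continuousAt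
    have hderiv : Continuous fun p : ℝ × ℝ => deriv (circleMap ((l p.1 : ℝ):ℂ) (δ/2)) p.2 := by
      simp only [deriv_circleMap]
      exact ((continuous_circleMap 0 _).comp continuous_snd).mul continuous_const
    exact hderiv.smul hinv
  -- uniform continuity of P on [0,1]
  have hK := (isCompact_Icc : IsCompact (Icc (0:ℝ) 1)).uniformContinuousOn_of_continuous
    hPc.continuousOn
  rw [Metric.uniformContinuousOn_iff] at hK
  obtain ⟨d, hd0, hd⟩ := hK (1/2) (by norm_num)
  obtain ⟨N, hN⟩ := exists_nat_one_div_lt hd0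
  set M : ℕ := N + 1 with hMdef
  have hM0 : (0:ℝ) < (M:ℝ) := by positivity
  have hMd : 1 / (M:ℝ) < d := by
    have : ((M:ℕ):ℝ) = (N:ℝ) + 1 := by push_cast [hMdef]; ring
    rw [this]
    exact hN
  -- inductive construction
  have key : ∀ k : ℕ, k ≤ M → ∃ φ : ℝ → EuclideanSpace ℂ (Fin n),
      ContinuousOn φ (Icc 0 ((k:ℝ)/(M:ℝ))) ∧
      ∀ t ∈ Icc (0:ℝ) ((k:ℝ)/(M:ℝ)), ‖φ t‖ = 1 ∧ S t (φ t) = ((l t : ℝ):ℂ) • φ t := by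
    intro k
    induction k with
    | zero =>
      intro _
      obtain ⟨v, hv1, hv2⟩ := unit_eigenvector (hlow' 0)
      refine ⟨fun _ => v, continuousOn_const, ?_⟩
      intro t ht
      have ht0 : t = 0 := by
        have h1 := ht.1
        have h2 := ht.2
        simp only [Nat.cast_zero, zero_div] at h2
        linarith
      rw [ht0]
      exact ⟨hv1, hv2⟩
    | succ k ih =>
      intro hk1
      obtain ⟨φ, hφc, hφp⟩ := ih (Nat.le_of_succ_le hk1)
      set a : ℝ := (k:ℝ)/(M:ℝ) with hadef
      set b : ℝ := ((k:ℝ)+1)/(M:ℝ) with hbdef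
      have hcast : ((k+1:ℕ):ℝ)/(M:ℝ) = b := by rw [hbdef]; push_cast; ring
      have ha0 : 0 ≤ a := by positivity
      have hab : a ≤ b := by
        rw [hadef, hbdef]
        gcongr
        linarith
      have hb1 : b ≤ 1 := by
        rw [hbdef, div_le_one hM0]
        have h9 : ((k+1:ℕ):ℝ) ≤ (M:ℝ) := Nat.cast_le.mpr hk1
        push_cast at h9 ⊢
        linarith
      have ha1 : a ≤ 1 := le_trans hab hb1
      have hamem : a ∈ Icc (0:ℝ) a := ⟨ha0, le_refl _⟩
      obtain ⟨hva, hvea⟩ := hφp a hamem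
      set v : EuclideanSpace ℂ (Fin n) := φ a with hvdef
      have hPav : P a v = v := hPfix a v hvea
      have hlow_norm : ∀ t ∈ Icc a b, (1:ℝ)/2 ≤ ‖P t v‖ := by
        intro t ht
        have htIcc : t ∈ Icc (0:ℝ) 1 := ⟨le_trans ha0 ht.1, le_trans ht.2 hb1⟩
        have haIcc : a ∈ Icc (0:ℝ) 1 := ⟨ha0, ha1⟩
        have hdist : dist t a < d := by
          rw [Real.dist_eq, _root_.abs_of_nonneg (sub_nonneg.mpr ht.1)]
          have h1 : t - a ≤ b - a := by linarith [ht.2]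
          have h2 : b - a = 1 / (M:ℝ) := by
            rw [hadef, hbdef]
            field_simp
            ring
          linarith
        have h2 := hd t htIcc a haIcc hdist
        have h3 : ‖P a v - P t v‖ ≤ ‖P a - P t‖ * ‖v‖ := by
          rw [← ContinuousLinearMap.sub_apply]
          exact (P a - P t).le_opNorm v
        have h4 : ‖P a - P t‖ = dist (P t) (P a) := by
          rw [dist_comm, dist_eq_norm]
        have h5 : ‖P a v‖ - ‖P t v‖ ≤ ‖P a v - P t v‖ := norm_sub_norm_le _ _
        rw [hPav] at h5 h3
        rw [hva] at h5 h3
        rw [h4] at h3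
        simp only [mul_one] at h3
        linarith
      set g : ℝ → EuclideanSpace ℂ (Fin n) :=
        fun t => (((‖P t v‖:ℝ)):ℂ)⁻¹ • P t v with hgdef
      have hPvc : Continuous fun t => P t v :=
        (ContinuousLinearMap.apply ℂ (EuclideanSpace ℂ (Fin n)) v).continuous.comp hPc
      have hgc : ContinuousOn g (Icc a b) := by
        refine ContinuousOn.smul (f := fun t => (((‖P t v‖:ℝ)):ℂ)⁻¹) (g := fun t => P t v) ?_ ?_
        · apply ContinuousOn.inv₀
          · exact (Complex.continuous_ofReal.comp hPvc.norm).continuousOn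
          · intro t ht
            have := hlow_norm t ht
            simp only [ne_eq, Complex.ofReal_eq_zero]
            intro hc
            rw [hc] at this
            linarith
        · exact hPvc.continuousOn
      set ψ : ℝ → EuclideanSpace ℂ (Fin n) := fun t => if t ≤ a then φ t else g t with hψdef
      have hψeqφ : EqOn ψ φ (Icc 0 a) := fun t ht => if_pos ht.2
      have hga : g a = v := by
        rw [hgdef]
        simp only
        rw [hPav, hva]
        norm_num
      have hψeqg : EqOn ψ g (Icc a b) := by
        intro t ht
        by_cases h : t ≤ a
        · have hta : t = a := le_antisymm h ht.1
          rw [hψdef]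
          simp only [hta, if_pos (le_refl a)]
          rw [hga, ← hvdef]
        · exact if_neg h
      have hψc : ContinuousOn ψ (Icc 0 b) := by
        rw [← Set.Icc_union_Icc_eq_Icc ha0 hab]
        exact continuousOn_union_isClosed isClosed_Icc isClosed_Icc
          (hφc.congr hψeqφ) (hgc.congr hψeqg)
      refine ⟨ψ, ?_, ?_⟩
      · rw [hcast]; exact hψc
      · rw [hcast]
        intro t ht
        by_cases h : t ≤ a
        · rw [hψdef]
          simp only [if_pos h]
          exact hφp t ⟨ht.1, h⟩
        · push_neg at h
          have htab : t ∈ Icc a b := ⟨h.le, ht.2⟩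
          have hn2 := hlow_norm t htab
          have hnz : ‖P t v‖ ≠ 0 := by intro hc; rw [hc] at hn2; linarith
          have hψt : ψ t = (((‖P t v‖:ℝ)):ℂ)⁻¹ • P t v := by
            rw [hψdef]; simp only [if_neg (not_le.mpr h)]; rfl
          constructor
          · rw [hψt, norm_smul, norm_inv, Complex.norm_real, Real.norm_eq_abs,
              _root_.abs_of_nonneg (norm_nonneg _), inv_mul_cancel₀ hnz]
          · rw [hψt, map_smul, hPeig t v, smul_comm]
  obtain ⟨φ, hφc, hφp⟩ := key M (le_refl M)
  have hM1 : ((M:ℕ):ℝ)/(M:ℝ) = 1 := div_self (ne_of_gt hM0)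
  rw [hM1] at hφc hφp
  refine ⟨φ, hφc, ?_⟩
  intro t ht
  obtain ⟨h1, h2⟩ := hφp t ht
  refine ⟨h1, ?_⟩
  have hSt : S t = T t := by rw [hSdef]; simp only; rw [hσeq t ht]
  have hlt : l t = lam0 t := by rw [hldef]; simp only; rw [hσeq t ht]
  rw [hSt, hlt] at h2
  exact h2
end

section
/- Let f : ℝᵖ × [0,1] → ℝ be twice continuously differentiable and θ* : [0,1] → ℝᵖ continuous such that for each t, θ*(t) is a local minimizer of f(·,t) and the Hessian ∇²_θ f(θ*(t),t) is positive definite. Then there exists ε > 0 such that for all t ∈ [0,1], θ*(t) is the unique stationary point of f(·,t) in the open ball of radius ε around θ*(t). -/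
open Set Metric

abbrev EE (p : ℕ) := EuclideanSpace ℝ (Fin p)

theorem uniform_local_uniqueness_of_minimizers
    {p : ℕ}
    (f : EuclideanSpace ℝ (Fin p) × ℝ → ℝ)
    (hf : ContDiff ℝ 2 f)
    (θs : ℝ → EuclideanSpace ℝ (Fin p))
    (hθc : ContinuousOn θs (Icc (0:ℝ) 1))
    (hmin : ∀ t ∈ Icc (0:ℝ) 1, IsLocalMin (fun θ => f (θ, t)) (θs t))
    (hstat : ∀ t ∈ Icc (0:ℝ) 1, gradient (fun θ => f (θ, t)) (θs t) = 0)
    (hhess : ∀ t ∈ Icc (0:ℝ) 1, ∀ v : EuclideanSpace ℝ (Fin p), v ≠ 0 →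
      0 < (inner ℝ ((fderiv ℝ (fun θ => gradient (fun x => f (x, t)) θ) (θs t)) v) v : ℝ)) :
    ∃ ε > (0:ℝ), ∀ t ∈ Icc (0:ℝ) 1, ∀ θ ∈ ball (θs t) ε,
      gradient (fun x => f (x, t)) θ = 0 → θ = θs t := by
  classical
  -- the inclusion (EE p) →L (EE p) × ℝ
  set J : (EE p) →L[ℝ] (EE p) × ℝ := (ContinuousLinearMap.id ℝ (EE p)).prod 0 with hJ
  have hfdiff : Differentiable ℝ f := hf.differentiable (by norm_num)
  -- inclusion has derivative J
  have hincl : ∀ (t : ℝ) (θ : (EE p)), HasFDerivAt (fun x : (EE p) => (x, t)) J θ := by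
    intro t θ
    exact (hasFDerivAt_id θ).prodMk (hasFDerivAt_const t θ)
  -- partial derivative formula
  have hpart : ∀ (t : ℝ) (θ : (EE p)),
      fderiv ℝ (fun x : (EE p) => f (x, t)) θ = (fderiv ℝ f (θ, t)).comp J := by
    intro t θ
    exact (((hfdiff (θ, t)).hasFDerivAt.comp θ (hincl t θ))).fderiv
  -- the gradient map, written in a form whose smoothness is easy to establish
  set Φ : ((EE p) × ℝ →L[ℝ] ℝ) →L[ℝ] (EE p) :=
    ((InnerProductSpace.toDual ℝ (EE p)).symm.toContinuousLinearEquiv :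
      ((EE p) →L[ℝ] ℝ) ≃L[ℝ] (EE p)).toContinuousLinearMap.comp
      ((ContinuousLinearMap.compL ℝ (EE p) ((EE p) × ℝ) ℝ).flip J) with hΦ
  set G : (EE p) × ℝ → (EE p) := fun z => Φ (fderiv ℝ f z) with hG
  have hΦ_apply : ∀ D : (EE p) × ℝ →L[ℝ] ℝ,
      Φ D = (InnerProductSpace.toDual ℝ (EE p)).symm (D.comp J) := fun D => rfl
  have hgrad : ∀ (t : ℝ) (θ : (EE p)), gradient (fun x : (EE p) => f (x, t)) θ = G (θ, t) := by
    intro t θ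
    show (InnerProductSpace.toDual ℝ (EE p)).symm (fderiv ℝ (fun x : (EE p) => f (x, t)) θ) = _
    rw [hpart t θ]
    rfl
  have hGsm : ContDiff ℝ 1 G :=
    Φ.contDiff.comp (hf.fderiv_right (by norm_num))
  -- the full map F(θ,t) = (G(θ,t), t)
  set F : (EE p) × ℝ → (EE p) × ℝ := fun z => (G z, z.2) with hF
  have hFsm : ContDiff ℝ 1 F := hGsm.prodMk contDiff_snd
  have hGdiff : Differentiable ℝ G := hGsm.differentiable (by norm_num)
  have hFderiv : ∀ z : (EE p) × ℝ,
      HasFDerivAt F ((fderiv ℝ G z).prod (ContinuousLinearMap.snd ℝ (EE p) ℝ)) z := by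
    intro z
    exact (hGdiff z).hasFDerivAt.prodMk (hasFDerivAt_snd)
  -- relation between partial Hessian and derivative of G
  have hHess : ∀ t ∈ Icc (0:ℝ) 1,
      fderiv ℝ (fun θ => gradient (fun x => f (x, t)) θ) (θs t)
        = (fderiv ℝ G (θs t, t)).comp J := by
    intro t ht
    have : (fun θ => gradient (fun x => f (x, t)) θ) = fun θ : (EE p) => G (θ, t) := by
      funext θ; exact hgrad t θ
    rw [this]
    exact ((hGdiff (θs t, t)).hasFDerivAt.comp (θs t) (hincl t (θs t))).fderiv
  -- for each t, F has an invertible strict derivative at (θs t, t),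
  -- hence is injective on a neighborhood
  have key : ∀ t ∈ Icc (0:ℝ) 1, ∃ r > (0:ℝ),
      Set.InjOn F (ball ((θs t, t) : (EE p) × ℝ) (2 * r)) := by
    intro t ht
    set A : (EE p) × ℝ →L[ℝ] (EE p) × ℝ :=
      (fderiv ℝ G (θs t, t)).prod (ContinuousLinearMap.snd ℝ (EE p) ℝ) with hA
    have hAinj : Function.Injective A := by
      intro w w' hww'
      have h0 : A (w - w') = 0 := by rw [map_sub, hww', sub_self]
      have h2 : (w - w').2 = 0 := congrArg Prod.snd h0
      have h1 : fderiv ℝ G (θs t, t) (w - w') = 0 := congrArg Prod.fst h0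
      have hv0 : (w - w') = ((w - w').1, (0:ℝ)) := by
        rw [← h2]
      have hveq : (w - w') = J (w - w').1 := by
        rw [hv0]; rfl
      have hfirst : (w - w').1 = 0 := by
        by_contra hne
        have := hhess t ht (w - w').1 hne
        rw [hHess t ht] at this
        have : (0:ℝ) < inner ℝ (fderiv ℝ G (θs t, t) (J (w - w').1)) (w - w').1 := this
        rw [← hveq, h1] at this
        simp at this
      have : w - w' = 0 := by rw [hveq, hfirst, map_zero]
      exact sub_eq_zero.mp this
    have hAbij : Function.Bijective A := by
      refine ⟨hAinj, ?_⟩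
      have := (LinearMap.injective_iff_surjective (f := (A : (EE p) × ℝ →ₗ[ℝ] (EE p) × ℝ))).mp hAinj
      exact this
    set e : ((EE p) × ℝ) ≃L[ℝ] (EE p) × ℝ :=
      (LinearEquiv.ofBijective (A : (EE p) × ℝ →ₗ[ℝ] (EE p) × ℝ) hAbij).toContinuousLinearEquiv with he
    have hcoe : (e : (EE p) × ℝ →L[ℝ] (EE p) × ℝ) = A :=
      ContinuousLinearMap.ext fun x => rfl
    have hstrict : HasStrictFDerivAt F ((e : (EE p) × ℝ →L[ℝ] (EE p) × ℝ)) (θs t, t) := by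
      rw [hcoe]
      have h1 : HasStrictFDerivAt F (fderiv ℝ F (θs t, t)) (θs t, t) :=
        (hFsm.contDiffAt).hasStrictFDerivAt (by norm_num)
      have h2 : fderiv ℝ F (θs t, t) = A := (hFderiv (θs t, t)).fderiv
      rwa [h2] at h1
    set φ := hstrict.toOpenPartialHomeomorph F with hφ
    have hsrc : (θs t, t) ∈ φ.source := hstrict.mem_toOpenPartialHomeomorph_source
    obtain ⟨δ, hδ, hball⟩ := Metric.isOpen_iff.mp φ.open_source _ hsrc
    refine ⟨δ / 2, by linarith, ?_⟩
    have h2r : (2 : ℝ) * (δ / 2) = δ := by ring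
    rw [h2r]
    intro x hx y hy hxy
    have : Set.InjOn F φ.source := by
      have := φ.injOn
      rwa [show (φ : (EE p) × ℝ → (EE p) × ℝ) = F from hstrict.toOpenPartialHomeomorph_coe] at this
    exact this (hball hx) (hball hy) hxy
  choose! r hr hinj using key
  -- compactness
  set z : ℝ → (EE p) × ℝ := fun t => (θs t, t) with hz
  have hzc : ContinuousOn z (Icc (0:ℝ) 1) := hθc.prodMk (continuousOn_id)
  have hK : IsCompact (z '' Icc (0:ℝ) 1) := (isCompact_Icc).image_of_continuousOn hzc
  have hcover : z '' Icc (0:ℝ) 1 ⊆ ⋃ t ∈ Icc (0:ℝ) 1, ball (z t) (r t) := by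
    rintro _ ⟨t, ht, rfl⟩
    exact Set.mem_biUnion ht (mem_ball_self (hr t ht))
  obtain ⟨s, hsub, hsfin, hscov⟩ :=
    hK.elim_finite_subcover_image (fun t ht => isOpen_ball) hcover
  have hKne : z 0 ∈ z '' Icc (0:ℝ) 1 := ⟨0, by simp, rfl⟩
  have hsne : s.Nonempty := by
    rcases Set.mem_iUnion₂.mp (hscov hKne) with ⟨i, hi, _⟩
    exact ⟨i, hi⟩
  have hsne' : hsfin.toFinset.Nonempty := by
    rcases hsne with ⟨i, hi⟩
    exact ⟨i, hsfin.mem_toFinset.mpr hi⟩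
  set ε := hsfin.toFinset.inf' hsne' r with hεdef
  have hεpos : 0 < ε := by
    rw [hεdef]
    apply (Finset.lt_inf'_iff hsne').mpr
    intro i hi
    exact hr i (hsub (hsfin.mem_toFinset.mp hi))
  have hεle : ∀ i ∈ s, ε ≤ r i := by
    intro i hi
    exact Finset.inf'_le _ (hsfin.mem_toFinset.mpr hi)
  refine ⟨ε, hεpos, ?_⟩
  intro t ht θ hθ hgrad0
  have hzt : z t ∈ z '' Icc (0:ℝ) 1 := ⟨t, ht, rfl⟩
  rcases Set.mem_iUnion₂.mp (hscov hzt) with ⟨i, hi, hzti⟩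
  have hiIcc : i ∈ Icc (0:ℝ) 1 := hsub hi
  have hdzt : dist (z t) (z i) < r i := mem_ball.mp hzti
  have hd1 : dist ((θ, t) : (EE p) × ℝ) (z t) = dist θ (θs t) := by
    rw [hz, Prod.dist_eq]
    simp [max_eq_left dist_nonneg]
  have hθt : ((θ, t) : (EE p) × ℝ) ∈ ball (z i) (2 * r i) := by
    rw [mem_ball]
    calc dist ((θ, t) : (EE p) × ℝ) (z i)
        ≤ dist ((θ, t) : (EE p) × ℝ) (z t) + dist (z t) (z i) := dist_triangle _ _ _
      _ < ε + r i := by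
          apply add_lt_add_of_lt_of_le
          · rw [hd1]; exact mem_ball.mp hθ
          · exact le_of_lt hdzt
      _ ≤ r i + r i := by
          have := hεle i hi
          linarith
      _ = 2 * r i := by ring
  have hzt_mem : z t ∈ ball (z i) (2 * r i) := by
    rw [mem_ball]
    calc dist (z t) (z i) < r i := hdzt
      _ ≤ 2 * r i := by have := hr i hiIcc; linarith
  have hFeq : F (θ, t) = F (z t) := by
    rw [hF, hz]
    have h1 : G (θ, t) = 0 := by rw [← hgrad t θ]; exact hgrad0
    have h2 : G (θs t, t) = 0 := by
      rw [← hgrad t (θs t)]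
      exact hstat t ht
    simp [h1, h2]
  have := hinj i hiIcc hθt hzt_mem hFeq
  exact congrArg Prod.fst this
end
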